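/- Let X, P be square-integrable with E[X - P] = 0 and Cov(X - P, W) = 0 for all square-integrable W measurable with respect to a sub-σ-algebra F. Let G be an F-measurable square-integrable random vector with invertible covariance, and let E_G[X] be the Bayes linear rule of X given G. Then E[(P - E_G[X])^2] ≤ E[(P - W)^2] for any component W of G (or affine combination of components of G). In particular the posterior belief assessment E_G[X] is at least as close to the prevision P as any single alternative Bayesian conditional expectation included in G. -/

import Mathlib

open MeasureTheory Filter

noncomputable def mean {Ω : Type*} [MeasurableSpace Ω] (μ : Measure Ω) (X : Ω → ℝ) : ℝ :=
  ∫ ω, X ω ∂μ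

noncomputable def cov {Ω : Type*} [MeasurableSpace Ω] (μ : Measure Ω) (X Y : Ω → ℝ) : ℝ :=
  ∫ ω, (X ω - mean μ X) * (Y ω - mean μ Y) ∂μ

noncomputable def var {Ω : Type*} [MeasurableSpace Ω] (μ : Measure Ω) (X : Ω → ℝ) : ℝ :=
  cov μ X X

noncomputable def covMat {Ω : Type*} [MeasurableSpace Ω] (μ : Measure Ω) {m : ℕ}
    (G : Fin m → Ω → ℝ) : Matrix (Fin m) (Fin m) ℝ :=
  Matrix.of fun i j => cov μ (G i) (G j)

/-- Bayes linear rule: `E[X] + Cov(X,G) Var(G)⁻¹ (G - E[G])`. -/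
noncomputable def blRule {Ω : Type*} [MeasurableSpace Ω] (μ : Measure Ω) {m : ℕ}
    (X : Ω → ℝ) (G : Fin m → Ω → ℝ) : Ω → ℝ :=
  fun ω => mean μ X +
    ∑ i, ∑ j, cov μ X (G i) * (covMat μ G)⁻¹ i j * (G j ω - mean μ (G j))

section aux
variable {Ω : Type*} [MeasurableSpace Ω] {μ : Measure Ω} [IsProbabilityMeasure μ]

lemma integrable_mul2 {f g : Ω → ℝ} (hf : MemLp f 2 μ) (hg : MemLp g 2 μ) :
    Integrable (fun ω => f ω * g ω) μ := by
  have h1 : Integrable (fun ω => ((f ω + g ω) ^ 2 - f ω ^ 2 - g ω ^ 2) * (1 / 2)) μ :=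
    (((hf.add hg).integrable_sq.sub hf.integrable_sq).sub hg.integrable_sq).mul_const _
  convert h1 using 2 with ω
  ring

lemma mean_sub {f g : Ω → ℝ} (hf : MemLp f 2 μ) (hg : MemLp g 2 μ) :
    mean μ (fun ω => f ω - g ω) = mean μ f - mean μ g := by
  simp only [mean]
  exact integral_sub (hf.integrable one_le_two) (hg.integrable one_le_two)

lemma cov_sub_left {f g h : Ω → ℝ} (hf : MemLp f 2 μ) (hg : MemLp g 2 μ) (hh : MemLp h 2 μ) :
    cov μ (fun ω => f ω - g ω) h = cov μ f h - cov μ g h := by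
  simp only [cov, mean_sub hf hg]
  have c1 : MemLp (fun ω => f ω - mean μ f) 2 μ := hf.sub (memLp_const _)
  have c2 : MemLp (fun ω => g ω - mean μ g) 2 μ := hg.sub (memLp_const _)
  have c3 : MemLp (fun ω => h ω - mean μ h) 2 μ := hh.sub (memLp_const _)
  rw [← integral_sub (integrable_mul2 c1 c3) (integrable_mul2 c2 c3)]
  congr 1 with ω
  ring

lemma mean_centered {f : Ω → ℝ} (hf : MemLp f 2 μ) :
    ∫ ω, (f ω - mean μ f) ∂μ = 0 := by
  rw [integral_sub (hf.integrable one_le_two) (integrable_const _), integral_const]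
  simp [mean]
end aux

theorem stmt9 {Ω : Type*} (F : MeasurableSpace Ω) {m0 : MeasurableSpace Ω}
    (μ : Measure Ω) [IsProbabilityMeasure μ] (hF : F ≤ m0)
    {m : ℕ} (X P : Ω → ℝ) (G : Fin m → Ω → ℝ)
    (hX : MemLp X 2 μ) (hP : MemLp P 2 μ) (hG : ∀ i, MemLp (G i) 2 μ)
    (hGmeas : ∀ i, Measurable[F] (G i))
    (hinv : IsUnit (covMat μ G).det)
    (hmean : mean μ (fun ω => X ω - P ω) = 0)
    (horth : ∀ W : Ω → ℝ, MemLp W 2 μ → Measurable[F] W →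
      cov μ (fun ω => X ω - P ω) W = 0) :
    ∀ (a0 : ℝ) (a : Fin m → ℝ),
      ∫ ω, (P ω - blRule μ X G ω) ^ 2 ∂μ ≤
        ∫ ω, (P ω - (a0 + ∑ i, a i * G i ω)) ^ 2 ∂μ := by
  intro a0 a
  classical
  set b : Fin m → ℝ := fun j => ∑ i, cov μ X (G i) * (covMat μ G)⁻¹ i j with hb
  set gg : Fin m → Ω → ℝ := fun j ω => G j ω - mean μ (G j) with hgg
  set R : Ω → ℝ := fun ω => P ω - mean μ X - ∑ j, b j * gg j ω with hR
  have hgg2 : ∀ j, MemLp (gg j) 2 μ := fun j => (hG j).sub (memLp_const _)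
  have hsum2 : MemLp (fun ω => ∑ j, b j * gg j ω) 2 μ :=
    memLp_finset_sum Finset.univ (fun j _ => (hgg2 j).const_mul (b j))
  have hR2 : MemLp R 2 μ := (hP.sub (memLp_const _)).sub hsum2
  have hggint : ∀ j, ∫ ω, gg j ω ∂μ = 0 := fun j => mean_centered (hG j)
  -- mean equality
  have hmXP : mean μ X = mean μ P := by
    have h := mean_sub (μ := μ) hX hP
    rw [hmean] at h; linarith
  -- covariance equality
  have hcovXP : ∀ k, cov μ P (G k) = cov μ X (G k) := by
    intro k
    have h := horth (G k) (hG k) (hGmeas k)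
    rw [cov_sub_left hX hP (hG k)] at h; linarith
  -- matrix identity
  have hmat : ∀ k, ∑ j, b j * cov μ (G j) (G k) = cov μ X (G k) := by
    intro k
    have hA : (covMat μ G)⁻¹ * covMat μ G = 1 := Matrix.nonsing_inv_mul _ hinv
    calc ∑ j, b j * cov μ (G j) (G k)
        = ∑ j, ∑ i, cov μ X (G i) * ((covMat μ G)⁻¹ i j * covMat μ G j k) := by
          refine Finset.sum_congr rfl fun j _ => ?_
          rw [hb, Finset.sum_mul]
          refine Finset.sum_congr rfl fun i _ => ?_
          simp only [covMat, Matrix.of_apply]; ring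
      _ = ∑ i, cov μ X (G i) * ∑ j, (covMat μ G)⁻¹ i j * covMat μ G j k := by
          rw [Finset.sum_comm]
          exact Finset.sum_congr rfl fun i _ => by rw [Finset.mul_sum]
      _ = ∑ i, cov μ X (G i) * (1 : Matrix (Fin m) (Fin m) ℝ) i k := by
          simp only [← Matrix.mul_apply, hA]
      _ = cov μ X (G k) := by
          simp [Matrix.one_apply, mul_ite, mul_one, mul_zero]
  -- integral of R is zero
  have hsumInt : Integrable (fun ω => ∑ j, b j * gg j ω) μ := hsum2.integrable one_le_two
  have hER : ∫ ω, R ω ∂μ = 0 := by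
    have h1 : Integrable (fun ω => P ω - mean μ X) μ :=
      (hP.integrable one_le_two).sub (integrable_const _)
    have : ∫ ω, R ω ∂μ
        = (∫ ω, (P ω - mean μ X) ∂μ) - ∫ ω, (∑ j, b j * gg j ω) ∂μ := by
      rw [hR, integral_sub h1 hsumInt]
    rw [this, integral_finset_sum _ (fun j _ => ((hgg2 j).integrable one_le_two).const_mul _)]
    simp only [integral_const_mul, hggint, mul_zero, Finset.sum_const_zero]
    rw [integral_sub (hP.integrable one_le_two) (integrable_const _), integral_const]
    have h2 : (∫ ω, X ω ∂μ) = ∫ ω, P ω ∂μ := hmXP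
    simp only [mean, measure_univ, probReal_univ, ENNReal.toReal_one, smul_eq_mul, one_mul]
    linarith
  -- integral of R * gg k is zero
  have hEg : ∀ k, ∫ ω, R ω * gg k ω ∂μ = 0 := by
    intro k
    have hPk : Integrable (fun ω => (P ω - mean μ X) * gg k ω) μ :=
      integrable_mul2 (hP.sub (memLp_const _)) (hgg2 k)
    have hjk : ∀ j, Integrable (fun ω => b j * (gg j ω * gg k ω)) μ := fun j =>
      (integrable_mul2 (hgg2 j) (hgg2 k)).const_mul _
    have hstep : ∀ ω, R ω * gg k ω
        = (P ω - mean μ X) * gg k ω - ∑ j, b j * (gg j ω * gg k ω) := by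
      intro ω
      rw [hR]
      simp only
      rw [sub_mul, Finset.sum_mul]
      congr 1
      exact Finset.sum_congr rfl fun j _ => by ring
    calc ∫ ω, R ω * gg k ω ∂μ
        = (∫ ω, (P ω - mean μ X) * gg k ω ∂μ)
          - ∫ ω, (∑ j, b j * (gg j ω * gg k ω)) ∂μ := by
          simp only [hstep]
          exact integral_sub hPk (integrable_finset_sum _ fun j _ => hjk j)
      _ = cov μ P (G k) - ∑ j, b j * cov μ (G j) (G k) := by
          congr 1
          · rw [hmXP]; rfl
          · rw [integral_finset_sum _ fun j _ => hjk j]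
            exact Finset.sum_congr rfl fun j _ => by rw [integral_const_mul]; rfl
      _ = 0 := by rw [hcovXP, hmat]; ring
  -- decomposition
  set c0 : ℝ := mean μ X - a0 - ∑ i, a i * mean μ (G i) with hc0
  set c : Fin m → ℝ := fun k => b k - a k with hc
  set S : Ω → ℝ := fun ω => c0 + ∑ k, c k * gg k ω with hS
  have hS2 : MemLp S 2 μ :=
    (memLp_const c0).add (memLp_finset_sum Finset.univ (fun j _ => (hgg2 j).const_mul (c j)))
  have hpt : ∀ ω, P ω - (a0 + ∑ i, a i * G i ω) = R ω + S ω := by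
    intro ω
    have h1 : ∑ k, c k * gg k ω = (∑ k, b k * gg k ω) - ∑ k, a k * gg k ω := by
      rw [← Finset.sum_sub_distrib]
      exact Finset.sum_congr rfl fun k _ => by rw [hc]; ring
    have h2 : ∑ i, a i * G i ω = (∑ i, a i * gg i ω) + ∑ i, a i * mean μ (G i) := by
      rw [← Finset.sum_add_distrib]
      exact Finset.sum_congr rfl fun i _ => by rw [hgg]; ring
    rw [hR, hS, hc0]
    simp only
    rw [h1, h2]
    ring
  have hRS : ∫ ω, R ω * S ω ∂μ = 0 := by
    have hexp : ∀ ω, R ω * S ω = c0 * R ω + ∑ k, c k * (R ω * gg k ω) := by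
      intro ω
      rw [hS]
      simp only
      rw [mul_add, Finset.mul_sum]
      congr 1
      · ring
      · exact Finset.sum_congr rfl fun k _ => by ring
    simp only [hexp]
    rw [integral_add ((hR2.integrable one_le_two).const_mul c0)
      (integrable_finset_sum _ fun k _ => (integrable_mul2 hR2 (hgg2 k)).const_mul _),
      integral_finset_sum _ fun k _ => (integrable_mul2 hR2 (hgg2 k)).const_mul _]
    simp only [integral_const_mul, hER, hEg, mul_zero, Finset.sum_const_zero, add_zero]
  have hbl : ∀ ω, blRule μ X G ω = mean μ X + ∑ j, b j * gg j ω := by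
    intro ω
    simp only [blRule, hb, hgg]
    rw [Finset.sum_comm]
    exact congrArg _ (Finset.sum_congr rfl fun j _ => (Finset.sum_mul _ _ _).symm)
  calc ∫ ω, (P ω - blRule μ X G ω) ^ 2 ∂μ
      = ∫ ω, R ω ^ 2 ∂μ := by
        congr 1 with ω
        rw [hbl ω, hR]
        simp only
        ring
    _ ≤ ∫ ω, (R ω + S ω) ^ 2 ∂μ := by
        have hexp : ∀ ω, (R ω + S ω) ^ 2 = R ω ^ 2 + (2 * (R ω * S ω) + S ω ^ 2) := by
          intro ω; ring
        have hint1 : Integrable (fun ω => 2 * (R ω * S ω)) μ :=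
          (integrable_mul2 hR2 hS2).const_mul 2
        have hint2 : Integrable (fun ω => 2 * (R ω * S ω) + S ω ^ 2) μ :=
          hint1.add hS2.integrable_sq
        simp only [hexp]
        rw [integral_add hR2.integrable_sq hint2,
          integral_add hint1 hS2.integrable_sq, integral_const_mul, hRS]
        have h0 : 0 ≤ ∫ ω, S ω ^ 2 ∂μ := integral_nonneg fun ω => sq_nonneg _
        linarith
    _ = ∫ ω, (P ω - (a0 + ∑ i, a i * G i ω)) ^ 2 ∂μ := by
        congr 1 with ω
        rw [hpt ω]
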